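/- For every continuous compactly supported function f : ℝ² → ℂ and every x ∈ ℝ², one has lim_{t→0⁺} ∫_{ℝ²} K(t,x,y) f(y) dy = f(x); that is, the Mehler kernel is an approximate identity as t → 0⁺. -/

import Mathlib

open MeasureTheory Real Set Filter Topology

/-- The Mehler kernel `K(t,x,y)` of the Landau Hamiltonian with constant magnetic field `B₀`. -/
noncomputable def mehlerK (B₀ t : ℝ) (x y : ℝ × ℝ) : ℂ :=
  ((B₀ / (4 * Real.pi * Real.sinh (B₀ * t)) : ℝ) : ℂ) *
    Complex.exp
      (-(((B₀ * ((x.1 - y.1) ^ 2 + (x.2 - y.2) ^ 2) / (4 * Real.tanh (B₀ * t))) : ℝ) : ℂ)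
        - Complex.I * ((B₀ / 2 : ℝ) : ℂ) * (((x.1 * y.2 - x.2 * y.1) : ℝ) : ℂ))

lemma gauss2_integrable : Integrable (fun w : ℝ × ℝ => Real.exp (-(w.1 ^ 2 + w.2 ^ 2))) := by
  have h1 : Integrable (fun u : ℝ => Real.exp (-1 * u ^ 2)) := integrable_exp_neg_mul_sq one_pos
  have h := h1.mul_prod h1
  rw [← Measure.volume_eq_prod] at h
  refine h.congr (Eventually.of_forall fun w => ?_)
  show Real.exp (-1 * w.1 ^ 2) * Real.exp (-1 * w.2 ^ 2) = Real.exp (-(w.1 ^ 2 + w.2 ^ 2))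
  rw [← Real.exp_add]; ring_nf

lemma gauss2_integral : ∫ w : ℝ × ℝ, Real.exp (-(w.1 ^ 2 + w.2 ^ 2)) = π := by
  have h : ∀ w : ℝ × ℝ, Real.exp (-(w.1 ^ 2 + w.2 ^ 2))
      = Real.exp (-1 * w.1 ^ 2) * Real.exp (-1 * w.2 ^ 2) := by
    intro w; rw [← Real.exp_add]; ring_nf
  simp_rw [h]
  rw [Measure.volume_eq_prod,
    integral_prod_mul (f := fun u : ℝ => Real.exp (-1 * u ^ 2))
      (g := fun u : ℝ => Real.exp (-1 * u ^ 2)), integral_gaussian]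
  rw [div_one, Real.mul_self_sqrt Real.pi_pos.le]

lemma inner_tendsto (g : ℝ × ℝ → ℂ) (hg : Continuous g) (M : ℝ)
    (hM : ∀ y, ‖g y‖ ≤ M) (x : ℝ × ℝ) :
    Tendsto (fun c : ℝ => ∫ w : ℝ × ℝ,
        (π⁻¹ * Real.exp (-(w.1 ^ 2 + w.2 ^ 2))) • g (x + c • w))
      (𝓝 (0 : ℝ)) (𝓝 (g x)) := by
  have key := tendsto_integral_filter_of_dominated_convergence
      (μ := (volume : Measure (ℝ × ℝ))) (l := 𝓝 (0 : ℝ))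
      (F := fun c w => (π⁻¹ * Real.exp (-(w.1 ^ 2 + w.2 ^ 2))) • g (x + c • w))
      (f := fun w => (π⁻¹ * Real.exp (-(w.1 ^ 2 + w.2 ^ 2))) • g x)
      (bound := fun w => π⁻¹ * Real.exp (-(w.1 ^ 2 + w.2 ^ 2)) * M)
      ?_ ?_ ?_ ?_
  · have hval : ∫ w : ℝ × ℝ, (π⁻¹ * Real.exp (-(w.1 ^ 2 + w.2 ^ 2))) • g x = g x := by
      rw [integral_smul_const, integral_const_mul, gauss2_integral,
        inv_mul_cancel₀ Real.pi_pos.ne', one_smul]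
    rwa [hval] at key
  · refine Eventually.of_forall fun c => Continuous.aestronglyMeasurable ?_
    exact ((continuous_const.mul (by continuity : Continuous fun w : ℝ × ℝ => Real.exp (-(w.1 ^ 2 + w.2 ^ 2)))).smul
      (hg.comp (continuous_const.add (continuous_id.const_smul c))))
  · refine Eventually.of_forall fun c => Eventually.of_forall fun w => ?_
    rw [norm_smul, Real.norm_eq_abs, abs_of_nonneg (by positivity)]
    exact mul_le_mul_of_nonneg_left (hM _) (by positivity)
  · exact (gauss2_integrable.const_mul π⁻¹).mul_const M
  · refine Eventually.of_forall fun w => ?_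
    have h1 : Tendsto (fun c : ℝ => x + c • w) (𝓝 0) (𝓝 x) := by
      have h2 : Tendsto (fun c : ℝ => c • w) (𝓝 0) (𝓝 ((0:ℝ) • w)) :=
        (continuous_id.smul continuous_const).tendsto 0
      simpa using tendsto_const_nhds.add h2
    exact ((hg.tendsto x).comp h1).const_smul _

/-- **The Mehler kernel is an approximate identity as `t → 0⁺`.** For every continuous compactly
supported `f : ℝ² → ℂ` and every `x ∈ ℝ²`, `lim_{t→0⁺} ∫_{ℝ²} K(t,x,y) f(y) dy = f(x)`. -/
theorem mehlerK_approximate_identity (B₀ : ℝ) (hB : 0 < B₀) (f : ℝ × ℝ → ℂ)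
    (hf : Continuous f) (hsupp : HasCompactSupport f) (x : ℝ × ℝ) :
    Tendsto (fun t : ℝ => ∫ y : ℝ × ℝ, mehlerK B₀ t x y * f y)
      (𝓝[>] (0 : ℝ)) (𝓝 (f x)) := by
  obtain ⟨M, hM⟩ := hsupp.exists_bound_of_continuous hf
  set g : ℝ × ℝ → ℂ := fun y => Complex.exp
      (-(Complex.I * ((B₀ / 2 : ℝ) : ℂ) * (((x.1 * y.2 - x.2 * y.1) : ℝ) : ℂ))) * f y
    with hg_def
  have hg : Continuous g := by
    apply Continuous.mul _ hf
    exact Complex.continuous_exp.comp (by continuity)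
  have hgx : g x = f x := by
    have h0 : ((x.1 * x.2 - x.2 * x.1 : ℝ) : ℂ) = 0 := by push_cast; ring
    simp only [hg_def, h0, mul_zero, neg_zero, Complex.exp_zero, one_mul]
  have hgM : ∀ y, ‖g y‖ ≤ M := by
    intro y
    rw [hg_def]
    simp only [norm_mul]
    have h1 : ‖Complex.exp (-(Complex.I * ((B₀ / 2 : ℝ) : ℂ)
        * (((x.1 * y.2 - x.2 * y.1) : ℝ) : ℂ)))‖ = 1 := by
      rw [Complex.norm_exp]
      simp [Complex.mul_re]
    rw [h1, one_mul]
    exact hM y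
  -- the rescaling parameter
  have hc : Tendsto (fun t : ℝ => Real.sqrt (4 * Real.tanh (B₀ * t) / B₀)) (𝓝[>] 0) (𝓝 0) := by
    have htanh : Continuous Real.tanh := by
      have he : Real.tanh = fun u => Real.sinh u / Real.cosh u :=
        funext Real.tanh_eq_sinh_div_cosh
      rw [he]
      exact Real.continuous_sinh.div Real.continuous_cosh fun u => (Real.cosh_pos u).ne'
    have hcont : Continuous fun t : ℝ => Real.sqrt (4 * Real.tanh (B₀ * t) / B₀) :=
      Real.continuous_sqrt.comp ((continuous_const.mul
        (htanh.comp (continuous_const.mul continuous_id))).div_const B₀)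
    exact (hcont.tendsto' 0 0 (by simp)).mono_left nhdsWithin_le_nhds
  have hcosh : Tendsto (fun t : ℝ => (Real.cosh (B₀ * t))⁻¹) (𝓝[>] 0) (𝓝 1) := by
    have hcont : Continuous fun t : ℝ => (Real.cosh (B₀ * t))⁻¹ :=
      (Real.continuous_cosh.comp (continuous_const.mul continuous_id)).inv₀
        fun t => (Real.cosh_pos _).ne'
    exact (hcont.tendsto' 0 1 (by simp)).mono_left nhdsWithin_le_nhds
  have hmain : Tendsto (fun t : ℝ => (Real.cosh (B₀ * t))⁻¹ •
      ∫ w : ℝ × ℝ, (π⁻¹ * Real.exp (-(w.1 ^ 2 + w.2 ^ 2))) •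
        g (x + Real.sqrt (4 * Real.tanh (B₀ * t) / B₀) • w)) (𝓝[>] 0) (𝓝 (f x)) := by
    have h2 := (inner_tendsto g hg M hgM x).comp hc
    have h3 := hcosh.smul h2
    rw [one_smul, hgx] at h3
    exact h3
  refine hmain.congr' ?_
  filter_upwards [self_mem_nhdsWithin] with t ht
  rw [mem_Ioi] at ht
  have hbt : 0 < B₀ * t := mul_pos hB ht
  have hs : 0 < Real.sinh (B₀ * t) := Real.sinh_pos_iff.2 hbt
  have hch : 0 < Real.cosh (B₀ * t) := Real.cosh_pos _
  have hτ : 0 < Real.tanh (B₀ * t) := by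
    rw [Real.tanh_eq_sinh_div_cosh]; positivity
  set τ := Real.tanh (B₀ * t) with hτ_def
  set a : ℝ := B₀ / (4 * τ) with ha_def
  have ha : 0 < a := by positivity
  set c : ℝ := Real.sqrt (4 * τ / B₀) with hc_def
  have hcpos : 0 < c := Real.sqrt_pos.2 (by positivity)
  have hc2 : c ^ 2 = 4 * τ / B₀ := Real.sq_sqrt (by positivity)
  have hac : a * c ^ 2 = 1 := by
    rw [hc2, ha_def]; field_simp
  set Φ : ℝ × ℝ → ℂ := fun y =>
    ((a / π) * Real.exp (-(a * ((y.1 - x.1) ^ 2 + (y.2 - x.2) ^ 2)))) • g y with hΦ_def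
  -- pointwise identity
  have hpt : ∀ y : ℝ × ℝ, mehlerK B₀ t x y * f y = (Real.cosh (B₀ * t))⁻¹ • Φ y := by
    intro y
    have hA : B₀ * ((x.1 - y.1) ^ 2 + (x.2 - y.2) ^ 2) / (4 * τ)
        = a * ((y.1 - x.1) ^ 2 + (y.2 - x.2) ^ 2) := by
      rw [ha_def]; ring
    have hco : B₀ / (4 * π * Real.sinh (B₀ * t)) = (Real.cosh (B₀ * t))⁻¹ * (a / π) := by
      rw [ha_def, hτ_def, Real.tanh_eq_sinh_div_cosh, eq_comm, mul_comm]
      have hπ := Real.pi_pos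
      field_simp
    simp only [mehlerK, hΦ_def, hg_def]
    rw [hA, hco, sub_eq_add_neg, Complex.exp_add]
    simp only [Complex.real_smul]
    push_cast
    ring
  -- the substitution identity
  have hsub : ∀ w : ℝ × ℝ, (π⁻¹ * Real.exp (-(w.1 ^ 2 + w.2 ^ 2))) • g (x + c • w)
      = c ^ 2 • Φ (x + c • w) := by
    intro w
    rw [hΦ_def, smul_smul]
    congr 1
    have h1 : (x + c • w).1 - x.1 = c * w.1 := by
      simp [Prod.fst_add]
    have h2 : (x + c • w).2 - x.2 = c * w.2 := by
      simp [Prod.snd_add]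
    rw [h1, h2]
    have h3 : a * ((c * w.1) ^ 2 + (c * w.2) ^ 2) = w.1 ^ 2 + w.2 ^ 2 := by
      have : a * ((c * w.1) ^ 2 + (c * w.2) ^ 2) = (a * c ^ 2) * (w.1 ^ 2 + w.2 ^ 2) := by ring
      rw [this, hac, one_mul]
    rw [h3]
    have h4 : c ^ 2 * (a / π) = π⁻¹ := by
      have : c ^ 2 * (a / π) = (a * c ^ 2) / π := by ring
      rw [this, hac, one_div]
    rw [← h4]; ring
  -- put it together
  show (Real.cosh (B₀ * t))⁻¹ • ∫ w : ℝ × ℝ,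
      (π⁻¹ * Real.exp (-(w.1 ^ 2 + w.2 ^ 2))) • g (x + c • w)
    = ∫ y : ℝ × ℝ, mehlerK B₀ t x y * f y
  simp_rw [hpt, hsub]
  rw [integral_smul, integral_smul]
  have hscale : ∫ w : ℝ × ℝ, Φ (x + c • w)
      = |((c : ℝ) ^ Module.finrank ℝ (ℝ × ℝ))⁻¹| • ∫ z : ℝ × ℝ, Φ (x + z) :=
    Measure.integral_comp_smul volume (fun z => Φ (x + z)) c
  have hfr : Module.finrank ℝ (ℝ × ℝ) = 2 := by simp
  rw [hscale, hfr, integral_add_left_eq_self Φ x, smul_smul, smul_smul]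
  congr 1
  rw [abs_of_pos (by positivity)]
  field_simp
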